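/- (Core of Theorem 1.) Let γ be a composition of n, π ∈ Π_γ, and v ∈ ℝ^{Π_γ} with ‖v‖ = 1. Let M := span{ρ_L(σ)(B_π v) : σ ∈ S_n} ⊆ ℝ^{S_n}, a subspace invariant under the left S_n-action, and suppose M is irreducible (simple as an S_n-module under ρ_L). Put d := dim M. Then the family {√(d/n!)·B_μ v : μ ∈ Π_γ} is a tight Parseval frame for M: for every f ∈ M, f = (d/n!)·∑_{μ∈Π_γ} ⟨f, B_μ v⟩·B_μ v, and equivalently ∑_{μ∈Π_γ} |⟨f, √(d/n!)·B_μ v⟩|² = ‖f‖². -/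

import Mathlib

open Finset
open scoped Nat

/-- Ordered set partitions of `Fin n` of shape `γ : Fin ℓ → ℕ`: functions
`μ : Fin n → Fin ℓ` whose `j`-th block `μ⁻¹(j)` has exactly `γ j` elements. -/
def OSP (n ℓ : ℕ) (γ : Fin ℓ → ℕ) : Type :=
  {μ : Fin n → Fin ℓ // ∀ j : Fin ℓ, (Finset.univ.filter fun x => μ x = j).card = γ j}

instance {n ℓ : ℕ} {γ : Fin ℓ → ℕ} : Fintype (OSP n ℓ γ) := by
  unfold OSP; infer_instance

instance {n ℓ : ℕ} {γ : Fin ℓ → ℕ} : DecidableEq (OSP n ℓ γ) := by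
  unfold OSP; infer_instance

/-- The left action of `S_n` on ordered set partitions: `(σ · μ)(x) = μ (σ⁻¹ x)`. -/
def ospAct {n ℓ : ℕ} {γ : Fin ℓ → ℕ} (σ : Equiv.Perm (Fin n)) (μ : OSP n ℓ γ) : OSP n ℓ γ :=
  ⟨fun x => μ.1 (σ.symm x), fun j => by
    rw [← μ.2 j, ← Fintype.card_subtype, ← Fintype.card_subtype]
    exact Fintype.card_congr (σ.symm.subtypeEquiv fun a => Iff.rfl)⟩

/-- The characteristic ("lifting") map `B_π : ℝ^{Π_γ} → ℝ^{S_n}` given by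
`(B_π x)(σ) = x (σ⁻¹ · π)`. -/
def liftB {n ℓ : ℕ} {γ : Fin ℓ → ℕ} (π : OSP n ℓ γ) (x : OSP n ℓ γ → ℝ) :
    Equiv.Perm (Fin n) → ℝ :=
  fun σ => x (ospAct σ⁻¹ π)

/-- The left regular representation of `S_n` on `ℝ^{S_n}`: `(ρ_L(τ) f)(σ) = f (τ⁻¹ σ)`. -/
def rhoL {n : ℕ} (τ : Equiv.Perm (Fin n)) (f : Equiv.Perm (Fin n) → ℝ) :
    Equiv.Perm (Fin n) → ℝ :=
  fun σ => f (τ⁻¹ * σ)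

section Aux

open scoped RealInnerProductSpace

variable {n ℓ : ℕ} {γ : Fin ℓ → ℕ}

lemma ospAct_mul (σ τ : Equiv.Perm (Fin n)) (μ : OSP n ℓ γ) :
    ospAct σ (ospAct τ μ) = ospAct (σ * τ) μ := rfl

lemma ospAct_one (μ : OSP n ℓ γ) : ospAct 1 μ = μ := rfl

/-- `ospAct σ` as an equivalence of `OSP n ℓ γ`. -/
def ospEquiv (σ : Equiv.Perm (Fin n)) : OSP n ℓ γ ≃ OSP n ℓ γ where
  toFun := ospAct σ
  invFun := ospAct σ⁻¹
  left_inv μ := by rw [ospAct_mul, inv_mul_cancel, ospAct_one]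
  right_inv μ := by rw [ospAct_mul, mul_inv_cancel, ospAct_one]

lemma liftB_rhoL (v : OSP n ℓ γ → ℝ) (τ : Equiv.Perm (Fin n)) (μ : OSP n ℓ γ) :
    rhoL τ (liftB μ v) = liftB (ospAct τ μ) v := by
  funext σ
  show v (ospAct (τ⁻¹ * σ)⁻¹ μ) = v (ospAct σ⁻¹ (ospAct τ μ))
  rw [ospAct_mul, mul_inv_rev, inv_inv]

/-- The ambient Euclidean space on `S_n`. -/
abbrev ESn (n : ℕ) : Type := EuclideanSpace ℝ (Equiv.Perm (Fin n))

/-- Identity map into the Euclidean space (type-ascription helper). -/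
def toE {n : ℕ} (f : Equiv.Perm (Fin n) → ℝ) : ESn n := WithLp.toLp 2 f

lemma rhoL_mul (τ₁ τ₂ : Equiv.Perm (Fin n)) (f : Equiv.Perm (Fin n) → ℝ) :
    rhoL τ₁ (rhoL τ₂ f) = rhoL (τ₁ * τ₂) f := by
  funext σ
  show f (τ₂⁻¹ * (τ₁⁻¹ * σ)) = f ((τ₁ * τ₂)⁻¹ * σ)
  rw [mul_inv_rev, mul_assoc]

/-- `toE` as a linear map. -/
def toELin (n : ℕ) : (Equiv.Perm (Fin n) → ℝ) →ₗ[ℝ] ESn n where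
  toFun := toE
  map_add' _ _ := rfl
  map_smul' _ _ := rfl

/-- `rhoL τ` as a linear map on the Euclidean space. -/
def rhoLin (τ : Equiv.Perm (Fin n)) : ESn n →ₗ[ℝ] ESn n where
  toFun f := toE (rhoL τ f)
  map_add' _ _ := rfl
  map_smul' _ _ := rfl

/-- Transitivity of the `S_n`-action on ordered set partitions of a fixed shape. -/
lemma osp_transitive (μ π : OSP n ℓ γ) : ∃ σ : Equiv.Perm (Fin n), ospAct σ π = μ := by
  have hcard : ∀ j : Fin ℓ, Fintype.card {x // μ.1 x = j} = Fintype.card {x // π.1 x = j} := by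
    intro j
    rw [Fintype.card_subtype, Fintype.card_subtype, μ.2 j, π.2 j]
  let e : ∀ j : Fin ℓ, {x // μ.1 x = j} ≃ {x // π.1 x = j} := fun j =>
    Fintype.equivOfCardEq (hcard j)
  let σ₀ : Equiv.Perm (Fin n) :=
    (Equiv.sigmaFiberEquiv μ.1).symm.trans
      ((Equiv.sigmaCongrRight e).trans (Equiv.sigmaFiberEquiv π.1))
  have hσ : ∀ x, π.1 (σ₀ x) = μ.1 x := by
    intro x
    have h : σ₀ x = ((e (μ.1 x)) ⟨x, rfl⟩ : {y // π.1 y = μ.1 x}).1 := rfl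
    rw [h]
    exact ((e (μ.1 x)) ⟨x, rfl⟩).2
  refine ⟨σ₀⁻¹, Subtype.ext (funext fun x => ?_)⟩
  show π.1 ((σ₀⁻¹ : Equiv.Perm (Fin n)).symm x) = μ.1 x
  exact hσ x

end Aux

set_option maxHeartbeats 1000000 in
/-- core of Theorem 1 of the paper. -/
theorem tight_parseval_frame {n ℓ : ℕ} (hn : 1 ≤ n) (γ : Fin ℓ → ℕ)
    (hsum : ∑ j, γ j = n) (π : OSP n ℓ γ) (v : OSP n ℓ γ → ℝ)
    (hv : ∑ μ : OSP n ℓ γ, v μ ^ 2 = 1)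
    (M : Submodule ℝ (Equiv.Perm (Fin n) → ℝ))
    (hM : M = Submodule.span ℝ {f | ∃ σ : Equiv.Perm (Fin n), f = rhoL σ (liftB π v)})
    (hMbot : M ≠ ⊥)
    (hirr : ∀ N : Submodule ℝ (Equiv.Perm (Fin n) → ℝ), N ≤ M →
      (∀ τ : Equiv.Perm (Fin n), ∀ f ∈ N, rhoL τ f ∈ N) → N = ⊥ ∨ N = M)
    (d : ℕ) (hd : d = Module.finrank ℝ M) :
    ∀ f ∈ M,
      (f = fun σ : Equiv.Perm (Fin n) =>
        ((d : ℝ) / (n ! : ℝ)) * ∑ μ : OSP n ℓ γ,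
          (∑ τ : Equiv.Perm (Fin n), f τ * liftB μ v τ) * liftB μ v σ) ∧
      (∑ μ : OSP n ℓ γ,
          (∑ τ : Equiv.Perm (Fin n), f τ * (Real.sqrt ((d : ℝ) / (n ! : ℝ)) * liftB μ v τ)) ^ 2
        = ∑ τ : Equiv.Perm (Fin n), f τ ^ 2) := by
  classical
  open scoped RealInnerProductSpace in
  let b : OSP n ℓ γ → ESn n := fun μ => toE (liftB μ v)
  have hinner : ∀ f g : ESn n, ⟪f, g⟫ = ∑ σ, f σ * g σ := by
    intro f g; rw [PiLp.inner_apply]; simp [RCLike.inner_apply, mul_comm]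
  -- The frame operator.
  let T : ESn n →ₗ[ℝ] ESn n :=
    { toFun := fun f => ∑ μ : OSP n ℓ γ, ⟪b μ, f⟫ • b μ
      map_add' := by
        intro f g; simp [inner_add_right, add_smul, Finset.sum_add_distrib]
      map_smul' := by
        intro c f; simp [inner_smul_right, smul_smul, Finset.smul_sum] }
  have hT_apply : ∀ f : ESn n, T f = ∑ μ : OSP n ℓ γ, ⟪b μ, f⟫ • b μ := fun _ => rfl
  -- Each frame vector lies in `M`.
  have hbmem : ∀ μ : OSP n ℓ γ, (b μ : Equiv.Perm (Fin n) → ℝ) ∈ M := by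
    intro μ
    rw [hM]
    apply Submodule.subset_span
    obtain ⟨σ, hσ⟩ := osp_transitive μ π
    exact ⟨σ, by show liftB μ v = _; rw [liftB_rhoL, hσ]⟩
  have hTmem : ∀ f : ESn n, (T f : Equiv.Perm (Fin n) → ℝ) ∈ M := fun f =>
    by rw [hT_apply, WithLp.ofLp_sum]; exact Submodule.sum_mem _ fun μ _ => by rw [WithLp.ofLp_smul]; exact Submodule.smul_mem _ _ (hbmem μ)
  -- `rhoL` is orthogonal.
  have hrhoL_inner : ∀ (τ : Equiv.Perm (Fin n)) (f g : ESn n),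
      ⟪toE (rhoL τ f), toE (rhoL τ g)⟫ = ⟪f, g⟫ := by
    intro τ f g
    rw [hinner, hinner]
    exact Fintype.sum_equiv (Equiv.mulLeft τ⁻¹) _ _ fun σ => by
      simp [toE, rhoL, Equiv.mulLeft]
  -- `T` is symmetric.
  have hTsym : ∀ f g : ESn n, ⟪T f, g⟫ = ⟪f, T g⟫ := by
    intro f g
    rw [hT_apply, hT_apply, sum_inner, inner_sum]
    refine Finset.sum_congr rfl fun μ _ => ?_
    rw [real_inner_smul_left, real_inner_smul_right, real_inner_comm f (b μ)]
    ring
  -- `T` kills the orthogonal complement of `M`.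
  have hTzero : ∀ w : ESn n, (∀ g : ESn n, (g : Equiv.Perm (Fin n) → ℝ) ∈ M → ⟪w, g⟫ = 0) →
      T w = 0 := by
    intro w hw
    have h0 : ⟪T w, T w⟫ = 0 := by rw [hTsym]; exact hw _ (hTmem _)
    exact inner_self_eq_zero.mp h0
  -- `T` commutes with the left regular representation.
  have hTcomm : ∀ (τ : Equiv.Perm (Fin n)) (f : ESn n),
      T (toE (rhoL τ f)) = toE (rhoL τ (T f)) := by
    intro τ f
    have hrho_sum : toE (rhoL τ (T f)) =
        ∑ μ : OSP n ℓ γ, ⟪b μ, f⟫ • toE (rhoL τ (b μ)) := by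
      show rhoLin τ (T f) = _
      rw [hT_apply, map_sum]
      exact Finset.sum_congr rfl fun μ _ => by rw [map_smul]; rfl
    have h1 : ∀ μ : OSP n ℓ γ, b ((ospEquiv τ) μ) = toE (rhoL τ (b μ)) := fun μ =>
      congrArg toE (liftB_rhoL v τ μ).symm
    rw [hrho_sum, hT_apply]
    refine (Fintype.sum_equiv (ospEquiv τ)
      (fun μ => (⟪b μ, f⟫ : ℝ) • toE (rhoL τ (b μ)))
      (fun μ => (⟪b μ, toE (rhoL τ f)⟫ : ℝ) • b μ) fun μ => ?_).symm
    simp only [h1 μ, hrhoL_inner τ (b μ) f]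
  -- `M` is invariant under the left regular representation.
  have hMinv : ∀ (τ : Equiv.Perm (Fin n)), ∀ f ∈ M, rhoL τ f ∈ M := by
    intro τ f hf
    rw [hM] at hf ⊢
    induction hf using Submodule.span_induction with
    | mem x hx =>
      obtain ⟨σ, rfl⟩ := hx
      exact Submodule.subset_span ⟨τ * σ, (rhoL_mul τ σ _).symm⟩
    | zero =>
      have h0 : rhoL τ (0 : Equiv.Perm (Fin n) → ℝ) = 0 := rfl
      rw [h0]; exact Submodule.zero_mem _
    | add x y hx hy ihx ihy =>
      have h0 : rhoL τ (x + y) = rhoL τ x + rhoL τ y := rfl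
      rw [h0]; exact Submodule.add_mem _ ihx ihy
    | smul a x hx ihx =>
      have h0 : rhoL τ (a • x) = a • rhoL τ x := rfl
      rw [h0]; exact Submodule.smul_mem _ _ ihx
  -- Restrict `T` to `M` and find a real eigenvalue (Schur's lemma, real symmetric case).
  haveI : Nontrivial M := Submodule.nontrivial_iff_ne_bot.mpr hMbot
  -- Copy `M` as a submodule of the Euclidean space (same carrier, Euclidean instances).
  let M' : Submodule ℝ (ESn n) :=
    { carrier := {g : ESn n | (g : Equiv.Perm (Fin n) → ℝ) ∈ M}
      add_mem' := fun h h' => M.add_mem h h'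
      zero_mem' := M.zero_mem
      smul_mem' := fun c x h => M.smul_mem c h }
  have hM'mem : ∀ g : ESn n, g ∈ M' ↔ (g : Equiv.Perm (Fin n) → ℝ) ∈ M := fun _ => Iff.rfl
  have eMM' : M ≃ₗ[ℝ] M' :=
    { toFun := fun m => ⟨toE m.1, m.2⟩
      invFun := fun m => ⟨m.1.ofLp, m.2⟩
      map_add' := fun _ _ => rfl
      map_smul' := fun _ _ => rfl
      left_inv := fun _ => rfl
      right_inv := fun _ => rfl }
  haveI : Nontrivial M' := by
    rw [Submodule.nontrivial_iff_ne_bot, Submodule.ne_bot_iff]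
    obtain ⟨y, hy, hy0⟩ := (Submodule.ne_bot_iff M).mp hMbot
    exact ⟨toE y, hy, fun h => hy0 (congrArg WithLp.ofLp h)⟩
  -- Restrict `T` to `M'` and find a real eigenvalue (Schur's lemma, real symmetric case).
  let S : M' →ₗ[ℝ] M' := T.restrict (p := M') (q := M') fun x hx => hTmem x
  have hSsym : S.IsSymmetric := fun x y => hTsym x y
  obtain ⟨c, hc⟩ : ∃ c : ℝ, Module.End.HasEigenvalue S c :=
    ⟨_, hSsym.hasEigenvalue_iSup_of_finiteDimensional⟩
  obtain ⟨x, hx⟩ := hc.exists_hasEigenvector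
  have hx0 : (x : ESn n) ≠ 0 := fun h => hx.2 (Subtype.ext h)
  have hxval : T (x : ESn n) = c • (x : ESn n) := congrArg Subtype.val hx.apply_eq_smul
  -- The eigenspace inside `M` is a nonzero invariant submodule, hence all of `M`.
  let N : Submodule ℝ (Equiv.Perm (Fin n) → ℝ) :=
    M ⊓ Submodule.comap (toELin n) (LinearMap.ker (T - c • LinearMap.id))
  have memN : ∀ g : ESn n, g.ofLp ∈ N ↔ (g : Equiv.Perm (Fin n) → ℝ) ∈ M ∧ T g = c • g := by
    intro g
    simp only [N, Submodule.mem_inf, Submodule.mem_comap, LinearMap.mem_ker,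
      LinearMap.sub_apply, LinearMap.smul_apply, LinearMap.id_apply, sub_eq_zero]
    rfl
  have hNinv : ∀ τ : Equiv.Perm (Fin n), ∀ g ∈ N, rhoL τ g ∈ N := by
    intro τ g hg
    obtain ⟨hg1, hg2⟩ := (memN (toE g)).mp hg
    refine (memN (toE (rhoL τ g))).mpr ⟨hMinv τ g hg1, ?_⟩
    have h2 := hTcomm τ (toE g)
    rw [hg2] at h2
    exact h2
  have hNbot : N ≠ ⊥ := by
    exact (Submodule.ne_bot_iff N).mpr ⟨(x : ESn n).ofLp, (memN _).mpr ⟨x.2, hxval⟩, fun h => hx0 (congrArg (WithLp.toLp 2) h)⟩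
  have hNM : N = M := (hirr N inf_le_left hNinv).resolve_left hNbot
  have hTonM : ∀ g : ESn n, (g : Equiv.Perm (Fin n) → ℝ) ∈ M → T g = c • g := by
    intro g hg
    exact ((memN g).mp (hNM.symm ▸ hg)).2
  -- Trace computation: `∑_σ ⟪T δ_σ, δ_σ⟫` equals both `n!` and `c·d`.
  haveI : CompleteSpace M' := FiniteDimensional.complete ℝ M'
  let δ : Equiv.Perm (Fin n) → ESn n := fun σ => EuclideanSpace.single σ (1 : ℝ)
  have hδ : ∀ (g : ESn n) (σ : Equiv.Perm (Fin n)), ⟪g, δ σ⟫ = g σ := by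
    intro g σ
    rw [EuclideanSpace.inner_single_right]
    simp
  have traceA : ∑ σ : Equiv.Perm (Fin n), ⟪T (δ σ), δ σ⟫ = (n ! : ℝ) := by
    have h1 : ∀ σ : Equiv.Perm (Fin n), ⟪T (δ σ), δ σ⟫ = ∑ μ : OSP n ℓ γ, (b μ σ) ^ 2 := by
      intro σ
      rw [hT_apply, sum_inner]
      refine Finset.sum_congr rfl fun μ _ => ?_
      rw [real_inner_smul_left, hδ (b μ) σ]; ring
    rw [Finset.sum_congr rfl fun σ _ => h1 σ]
    have h2 : ∀ σ : Equiv.Perm (Fin n), ∑ μ : OSP n ℓ γ, (b μ σ) ^ 2 = 1 := by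
      intro σ
      have h3 := Equiv.sum_comp (ospEquiv σ⁻¹ : OSP n ℓ γ ≃ OSP n ℓ γ) (fun ν => v ν ^ 2)
      calc ∑ μ : OSP n ℓ γ, (b μ σ) ^ 2
          = ∑ μ : OSP n ℓ γ, v ((ospEquiv σ⁻¹ : OSP n ℓ γ ≃ OSP n ℓ γ) μ) ^ 2 := rfl
        _ = ∑ ν : OSP n ℓ γ, v ν ^ 2 := h3
        _ = 1 := hv
    rw [Finset.sum_congr rfl fun σ _ => h2 σ]
    simp [Finset.card_univ, Fintype.card_perm]
  have hdM' : d = Module.finrank ℝ M' := by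
    rw [hd]
    exact LinearEquiv.finrank_eq eMM'
  let e : OrthonormalBasis (Fin (Module.finrank ℝ M')) ℝ M' := stdOrthonormalBasis ℝ M'
  have traceB : ∑ σ : Equiv.Perm (Fin n), ⟪T (δ σ), δ σ⟫ = c * d := by
    have hproj : ∀ σ : Equiv.Perm (Fin n),
        T (δ σ) = c • ((M'.orthogonalProjectionOnto (δ σ) : M') : ESn n) := by
      intro σ
      have hsplit : δ σ = ((M'.orthogonalProjectionOnto (δ σ) : M') : ESn n)
          + (δ σ - ((M'.orthogonalProjectionOnto (δ σ) : M') : ESn n)) := by abel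
      have hz : T (δ σ - ((M'.orthogonalProjectionOnto (δ σ) : M') : ESn n)) = 0 := by
        refine hTzero _ fun g hg => ?_
        have hw := Submodule.sub_starProjection_mem_orthogonal (K := M') (δ σ)
        rw [real_inner_comm]
        exact (Submodule.mem_orthogonal _ _).mp hw g ((hM'mem g).mpr hg)
      conv_lhs => rw [hsplit]
      rw [map_add, hz, add_zero, hTonM _ (M'.orthogonalProjectionOnto (δ σ)).2]
    have hsum : ∀ σ : Equiv.Perm (Fin n),
        ⟪T (δ σ), δ σ⟫ = c * ∑ i, ((e i : ESn n) σ) ^ 2 := by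
      intro σ
      rw [hproj σ, real_inner_smul_left]
      congr 1
      have hpe : ((M'.orthogonalProjectionOnto (δ σ) : M') : ESn n)
          = ∑ i, ⟪(e i : ESn n), δ σ⟫ • (e i : ESn n) := by
        rw [e.orthogonalProjectionOnto_apply_eq_sum (δ σ)]
        push_cast
        rfl
      rw [hpe, sum_inner]
      refine Finset.sum_congr rfl fun i _ => ?_
      rw [real_inner_smul_left, hδ]; ring
    rw [Finset.sum_congr rfl fun σ _ => hsum σ]
    rw [← Finset.mul_sum, Finset.sum_comm]
    congr 1
    have hnorm : ∀ i, ∑ σ : Equiv.Perm (Fin n), ((e i : ESn n) σ) ^ 2 = 1 := by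
      intro i
      have h4 : ⟪(e i : ESn n), (e i : ESn n)⟫ = 1 := by
        have := e.orthonormal.1 i
        rw [@real_inner_self_eq_norm_sq]
        rw [show ‖(e i : ESn n)‖ = ‖e i‖ from rfl, this]
        norm_num
      rw [← h4, hinner]
      exact Finset.sum_congr rfl fun σ _ => sq _
    rw [Finset.sum_congr rfl fun i _ => hnorm i]
    simp [hdM']
  have hcd : c * (d : ℝ) = (n ! : ℝ) := traceB.symm.trans traceA
  have hd0 : (0 : ℝ) < (d : ℝ) := by
    have : 0 < Module.finrank ℝ M := Module.finrank_pos
    rw [hd]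
    exact_mod_cast this
  have hn0 : (0 : ℝ) < (n ! : ℝ) := by exact_mod_cast Nat.factorial_pos n
  have hqc : ((d : ℝ) / (n ! : ℝ)) * c = 1 := by
    field_simp
    linarith [hcd]
  -- Final computations.
  intro f hf
  have hTf : T (toE f) = c • toE f := hTonM (toE f) hf
  let evalL : ∀ σ : Equiv.Perm (Fin n), ESn n →ₗ[ℝ] ℝ := fun σ =>
    { toFun := fun g => g σ
      map_add' := fun _ _ => rfl
      map_smul' := fun _ _ => rfl }
  have key : ∀ σ : Equiv.Perm (Fin n),
      (∑ μ : OSP n ℓ γ, (∑ τ : Equiv.Perm (Fin n), f τ * liftB μ v τ) * liftB μ v σ)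
        = c * f σ := by
    intro σ
    have ha : ∀ μ : OSP n ℓ γ, (∑ τ : Equiv.Perm (Fin n), f τ * liftB μ v τ)
        = ⟪b μ, toE f⟫ := by
      intro μ
      rw [hinner]
      exact Finset.sum_congr rfl fun τ _ => mul_comm _ _
    have hval : (T (toE f)) σ = c * f σ := by rw [hTf]; rfl
    calc ∑ μ : OSP n ℓ γ, (∑ τ : Equiv.Perm (Fin n), f τ * liftB μ v τ) * liftB μ v σ
        = ∑ μ : OSP n ℓ γ, ⟪b μ, toE f⟫ * liftB μ v σ :=
          Finset.sum_congr rfl fun μ _ => by rw [ha μ]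
      _ = evalL σ (∑ μ : OSP n ℓ γ, ⟪b μ, toE f⟫ • b μ) := by
          rw [map_sum]
          rfl
      _ = (T (toE f)) σ := by rw [hT_apply]; rfl
      _ = c * f σ := hval
  have goal1 : f = fun σ : Equiv.Perm (Fin n) =>
      ((d : ℝ) / (n ! : ℝ)) * ∑ μ : OSP n ℓ γ,
        (∑ τ : Equiv.Perm (Fin n), f τ * liftB μ v τ) * liftB μ v σ := by
    funext σ
    rw [key σ, ← mul_assoc, hqc, one_mul]
  refine ⟨goal1, ?_⟩
  -- Parseval identity.
  have h2 : ∑ μ : OSP n ℓ γ, (∑ τ : Equiv.Perm (Fin n), f τ * liftB μ v τ) ^ 2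
      = c * ∑ τ : Equiv.Perm (Fin n), f τ ^ 2 := by
    calc ∑ μ : OSP n ℓ γ, (∑ τ : Equiv.Perm (Fin n), f τ * liftB μ v τ) ^ 2
        = ∑ μ : OSP n ℓ γ, ∑ τ : Equiv.Perm (Fin n),
            (f τ * liftB μ v τ) * (∑ τ' : Equiv.Perm (Fin n), f τ' * liftB μ v τ') := by
          refine Finset.sum_congr rfl fun μ _ => ?_
          rw [sq, ← Finset.sum_mul]
      _ = ∑ τ : Equiv.Perm (Fin n), ∑ μ : OSP n ℓ γ,
            (f τ * liftB μ v τ) * (∑ τ' : Equiv.Perm (Fin n), f τ' * liftB μ v τ') :=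
          Finset.sum_comm
      _ = ∑ τ : Equiv.Perm (Fin n), f τ * (c * f τ) := by
          refine Finset.sum_congr rfl fun τ _ => ?_
          rw [← key τ, Finset.mul_sum]
          exact Finset.sum_congr rfl fun μ _ => by ring
      _ = c * ∑ τ : Equiv.Perm (Fin n), f τ ^ 2 := by
          rw [Finset.mul_sum]
          exact Finset.sum_congr rfl fun τ _ => by ring
  have hsq : Real.sqrt ((d : ℝ) / (n ! : ℝ)) ^ 2 = (d : ℝ) / (n ! : ℝ) :=
    Real.sq_sqrt (by positivity)
  calc ∑ μ : OSP n ℓ γ,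
        (∑ τ : Equiv.Perm (Fin n), f τ * (Real.sqrt ((d : ℝ) / (n ! : ℝ)) * liftB μ v τ)) ^ 2
      = ∑ μ : OSP n ℓ γ, ((d : ℝ) / (n ! : ℝ)) *
          (∑ τ : Equiv.Perm (Fin n), f τ * liftB μ v τ) ^ 2 := by
        refine Finset.sum_congr rfl fun μ _ => ?_
        have : (∑ τ : Equiv.Perm (Fin n), f τ * (Real.sqrt ((d : ℝ) / (n ! : ℝ)) * liftB μ v τ))
            = Real.sqrt ((d : ℝ) / (n ! : ℝ)) * ∑ τ : Equiv.Perm (Fin n), f τ * liftB μ v τ := by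
          rw [Finset.mul_sum]
          exact Finset.sum_congr rfl fun τ _ => by ring
        rw [this, mul_pow, hsq]
    _ = ((d : ℝ) / (n ! : ℝ)) * (c * ∑ τ : Equiv.Perm (Fin n), f τ ^ 2) := by
        rw [← Finset.mul_sum, h2]
    _ = ∑ τ : Equiv.Perm (Fin n), f τ ^ 2 := by
        rw [← mul_assoc, hqc, one_mul]
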